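/- For positive integers n, k, parameters z_1, ..., z_k, x, q with all denominators nonzero: ∑_{n ≥ i_1 ≥ ... ≥ i_k ≥ 1} (1 - x^{i_k}) ∏_{j=1}^k q^{i_j}/((1-q^{i_j})(1 - z_j q^{i_j})) = ∑_{i=1}^n [n choose i]_q (-1)^{i-1} q^{binom(i+1,2) - ni} (q;q)_{i-1}/(z_1 q;q)_i · ∑_{i ≥ i_1 ≥ ... ≥ i_k ≥ 1} [(x;q)_{i_k} (z_k q;q)_{i_k}/(q;q)_{i_k}] · ∏_{j=1}^{k-1} [(z_j q;q)_{i_j} / ((1-q^{i_j})(z_{j+1} q;q)_{i_j})] · ∏_{j=1}^k q^{i_j}/(1 - z_j q^{i_j}). -/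

import Mathlib

noncomputable def qPoch (q a : ℝ) (n : ℕ) : ℝ := ∏ j ∈ Finset.range n, (1 - a * q ^ j)

noncomputable def qBinom (q : ℝ) (n r : ℕ) : ℝ :=
  if r ≤ n then qPoch q q n / (qPoch q q r * qPoch q q (n - r)) else 0

lemma qPoch_succ (q a : ℝ) (n : ℕ) : qPoch q a (n+1) = qPoch q a n * (1 - a * q^n) :=
  Finset.prod_range_succ _ _

lemma qPoch_q_succ (q : ℝ) (n : ℕ) : qPoch q q (n+1) = qPoch q q n * (1 - q^(n+1)) := by
  rw [qPoch_succ]; ring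

section hyp
variable {q : ℝ} (h1 : ∀ j : ℕ, 1 ≤ j → 1 - q ^ j ≠ 0)

include h1 in
lemma qPoch_q_ne : ∀ n, qPoch q q n ≠ 0 := by
  intro n
  induction n with
  | zero => simp [qPoch]
  | succ m ih => rw [qPoch_q_succ]; exact mul_ne_zero ih (h1 _ (by omega))

lemma qPoch_z_ne {z : ℝ} (h2 : ∀ j : ℕ, 1 ≤ j → 1 - z * q ^ j ≠ 0) :
    ∀ n, qPoch q (z*q) n ≠ 0 := by
  intro n
  induction n with
  | zero => simp [qPoch]
  | succ m ih =>
      rw [qPoch_succ]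
      refine mul_ne_zero ih ?_
      have : z * q * q ^ m = z * q ^ (m+1) := by ring
      rw [this]; exact h2 _ (by omega)

include h1 in
lemma qBinom_R1 (n i : ℕ) :
    qBinom q (n+1) i * (1 - q^(n+1-i)) = qBinom q n i * (1 - q^(n+1)) := by
  unfold qBinom
  rcases le_or_gt i n with h | h
  · obtain ⟨a, rfl⟩ : ∃ a, n = a + i := ⟨n - i, by omega⟩
    rw [if_pos (by omega), if_pos (by omega)]
    simp only [show a + i + 1 - i = a + 1 by omega, show a + i - i = a by omega,
      show a + i + 1 = (a + i) + 1 by omega]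
    rw [qPoch_q_succ q (a+i), qPoch_q_succ q a]
    have hPi := qPoch_q_ne h1 i
    have hPa := qPoch_q_ne h1 a
    have hv : (1 : ℝ) - q^(a+1) ≠ 0 := h1 _ (by omega)
    field_simp
  · rcases Nat.eq_or_lt_of_le h with h' | h'
    · rw [if_pos (by omega), if_neg (by omega)]
      simp [show n+1-i = 0 by omega]
    · rw [if_neg (by omega), if_neg (by omega)]; ring

include h1 in
lemma qBinom_R2 (n i : ℕ) :
    qBinom q (n+1) (i+1) * (1 - q^(i+1)) = qBinom q (n+1) i * (1 - q^(n+1-i)) := by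
  unfold qBinom
  rcases le_or_gt (i+1) (n+1) with h | h
  · obtain ⟨a, rfl⟩ : ∃ a, n = a + i := ⟨n - i, by omega⟩
    rw [if_pos (by omega), if_pos (by omega)]
    simp only [show a + i + 1 - (i+1) = a by omega, show a + i + 1 - i = a + 1 by omega]
    rw [qPoch_q_succ q a, qPoch_q_succ q i]
    have hPi := qPoch_q_ne h1 i
    have hPa := qPoch_q_ne h1 a
    have hv : (1 : ℝ) - q^(a+1) ≠ 0 := h1 _ (by omega)
    have hw : (1 : ℝ) - q^(i+1) ≠ 0 := h1 _ (by omega)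
    field_simp
  · rcases Nat.eq_or_lt_of_le h with h' | h'
    · rw [if_neg (by omega), if_pos (by omega)]
      simp [show n+1-i = 0 by omega]
    · rw [if_neg (by omega), if_neg (by omega)]; ring

include h1 in
lemma qBinom_pascal (n t : ℕ) (ht : t ≤ n) :
    qBinom q (n+1) (t+1) = qBinom q n (t+1) + qBinom q n t * q^(n-t) := by
  unfold qBinom
  rcases le_or_gt (t+1) n with h | h
  · obtain ⟨c, rfl⟩ : ∃ c, n = c + 1 + t := ⟨n - t - 1, by omega⟩
    rw [if_pos (by omega), if_pos (by omega), if_pos (by omega)]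
    simp only [show c + 1 + t + 1 - (t+1) = c + 1 by omega, show c + 1 + t - (t+1) = c by omega,
      show c + 1 + t - t = c + 1 by omega, show c + 1 + t + 1 = (c + 1 + t) + 1 by omega]
    rw [qPoch_q_succ q (c+1+t), qPoch_q_succ q c, qPoch_q_succ q t]
    have hPt := qPoch_q_ne h1 t
    have hPc := qPoch_q_ne h1 c
    have hv : (1 : ℝ) - q^(c+1) ≠ 0 := h1 _ (by omega)
    have hw : (1 : ℝ) - q^(t+1) ≠ 0 := h1 _ (by omega)
    field_simp
    ring
  · have h' : t = n := by omega
    subst h'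
    rw [if_pos (by omega), if_neg (by omega), if_pos le_rfl]
    have hP := qPoch_q_ne h1
    have h0 : qPoch q q 0 = 1 := by simp [qPoch]
    simp only [Nat.sub_self, Nat.add_sub_cancel_left, pow_zero, mul_one, h0]
    rw [div_self (hP _), div_self (hP _)]
    ring
end hyp

noncomputable def coeffA (q : ℝ) (N t : ℕ) : ℝ :=
  qBinom q N t * (-1)^t * q ^ (((t*(t+1)/2 : ℕ):ℤ) - (N:ℤ)*t)

lemma zpow_sub_eq {q : ℝ} (hq : q ≠ 0) (E m : ℕ) :
    q ^ (((E : ℕ):ℤ) - (m:ℤ)) = q^E / q^m := by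
  rw [zpow_sub₀ hq, zpow_natCast, zpow_natCast]

lemma coeffA_eq {q : ℝ} (hq : q ≠ 0) (N t : ℕ) :
    coeffA q N t = qBinom q N t * (-1)^t * (q^(t*(t+1)/2) / q^(N*t)) := by
  unfold coeffA
  rw [show ((N:ℤ)*t) = ((N*t : ℕ) : ℤ) by push_cast; ring, zpow_sub_eq hq]

lemma E_succ (t : ℕ) : (t+1)*(t+2)/2 = t*(t+1)/2 + (t+1) := by
  have h : (t+1)*(t+2) = t*(t+1) + 2*(t+1) := by ring
  rw [h, Nat.add_mul_div_left _ _ (by norm_num : 0 < 2)]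

section hyp2
variable {q : ℝ} (hq : q ≠ 0) (h1 : ∀ j : ℕ, 1 ≤ j → 1 - q ^ j ≠ 0)

include h1 in
lemma qBinom_zero (N : ℕ) : qBinom q N 0 = 1 := by
  unfold qBinom
  rw [if_pos (Nat.zero_le _)]
  have h0 : qPoch q q 0 = 1 := by simp [qPoch]
  simp [h0, div_self (qPoch_q_ne h1 N)]

lemma qBinom_of_gt {N t : ℕ} (h : N < t) : qBinom q N t = 0 := by
  unfold qBinom; rw [if_neg (by omega)]

include hq h1 in
lemma pascalA (N t : ℕ) (ht : t ≤ N) :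
    coeffA q (N+1) (t+1) * q^(t+1) = coeffA q N (t+1) - coeffA q N t * q := by
  obtain ⟨a, rfl⟩ : ∃ a, N = t + a := ⟨N - t, by omega⟩
  rw [coeffA_eq hq, coeffA_eq hq, coeffA_eq hq,
    qBinom_pascal h1 (t+a) t (by omega), show t+a-t = a by omega]
  rw [show (t+1)*(t+1+1)/2 = t*(t+1)/2 + (t+1) from E_succ t, pow_add]
  set w := q ^ (t*(t+1)/2) with hwdef
  have hw : w ≠ 0 := pow_ne_zero _ hq
  have hqp : ∀ m : ℕ, (q:ℝ)^m ≠ 0 := fun m => pow_ne_zero _ hq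
  field_simp
  ring
end hyp2

section hyp3
variable {q x : ℝ} (hq : q ≠ 0) (h1 : ∀ j : ℕ, 1 ≤ j → 1 - q ^ j ≠ 0)

include hq h1 in
lemma xpow_expand : ∀ N : ℕ, x^N = ∑ t ∈ Finset.range (N+1), coeffA q N t * qPoch q x t := by
  intro N
  induction N with
  | zero =>
      simp [coeffA, qBinom_zero h1, qPoch]
  | succ N ih =>
      have e0 : qPoch q x 0 = 1 := by simp [qPoch]
      have eA0 : ∀ m : ℕ, coeffA q m 0 = 1 := by
        intro m; simp [coeffA, qBinom_zero h1]
      have step1 : x^(N+1) = ∑ t ∈ Finset.range (N+1),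
          (coeffA q N t * qPoch q x t - coeffA q N t * qPoch q x (t+1)) / q^t := by
        rw [pow_succ, ih, Finset.sum_mul]
        refine Finset.sum_congr rfl fun t _ => ?_
        rw [qPoch_succ]
        have hqt : (q:ℝ)^t ≠ 0 := pow_ne_zero _ hq
        field_simp
        ring
      have split : ∑ t ∈ Finset.range (N+1),
          (coeffA q N t * qPoch q x t - coeffA q N t * qPoch q x (t+1)) / q^t
          = (∑ t ∈ Finset.range (N+1), coeffA q N t / q^t * qPoch q x t)
            - ∑ t ∈ Finset.range (N+1), coeffA q N t / q^t * qPoch q x (t+1) := by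
        rw [← Finset.sum_sub_distrib]
        refine Finset.sum_congr rfl fun t _ => ?_
        field_simp
      have hlast : coeffA q N (N+1) = 0 := by
        simp [coeffA, qBinom_of_gt (by omega : N < N+1)]
      have first : ∑ t ∈ Finset.range (N+1), coeffA q N t / q^t * qPoch q x t
          = (∑ t ∈ Finset.range (N+1), coeffA q N (t+1) / q^(t+1) * qPoch q x (t+1)) + 1 := by
        rw [Finset.sum_range_succ' (fun t => coeffA q N t / q^t * qPoch q x t) N,
          Finset.sum_range_succ (fun t => coeffA q N (t+1) / q^(t+1) * qPoch q x (t+1)) N,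
          hlast]
        simp [e0, eA0]
      rw [step1, split, first,
        Finset.sum_range_succ' (fun t => coeffA q (N+1) t * qPoch q x t) (N+1),
        e0, eA0, mul_one, add_sub_right_comm, ← Finset.sum_sub_distrib]
      congr 1
      refine Finset.sum_congr rfl fun t htm => ?_
      have ht : t ≤ N := by
        have := Finset.mem_range.mp htm; omega
      have hp := pascalA hq h1 N t ht
      have hqt : (q:ℝ)^(t+1) ≠ 0 := pow_ne_zero _ hq
      have hqt' : (q:ℝ)^t ≠ 0 := pow_ne_zero _ hq
      have hA : coeffA q (N+1) (t+1) = coeffA q N (t+1) / q^(t+1) - coeffA q N t / q^t := by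
        have h2 : coeffA q (N+1) (t+1) = (coeffA q N (t+1) - coeffA q N t * q)/q^(t+1) := by
          rw [eq_div_iff hqt]; exact hp
        rw [h2, sub_div, pow_succ, mul_div_mul_right _ _ hq]
      rw [hA]; ring
end hyp3

noncomputable def dd (q : ℝ) (n i : ℕ) : ℝ :=
  qBinom q n i * (-1)^(i-1) * q ^ (((i*(i+1)/2 : ℕ):ℤ) - (n:ℤ)*i) * qPoch q q (i-1)

lemma dd_eq {q : ℝ} (hq : q ≠ 0) (n i : ℕ) :
    dd q n i = qBinom q n i * (-1)^(i-1) * (q^(i*(i+1)/2) / q^(n*i)) * qPoch q q (i-1) := by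
  unfold dd
  rw [show ((n:ℤ)*i) = ((n*i : ℕ) : ℤ) by push_cast; ring, zpow_sub_eq hq]

lemma dd_of_gt {q : ℝ} {n i : ℕ} (h : n < i) : dd q n i = 0 := by
  unfold dd; rw [qBinom_of_gt h]; ring

lemma qPoch_zq_succ (q z : ℝ) (n : ℕ) :
    qPoch q (z*q) (n+1) = qPoch q (z*q) n * (1 - z * q^(n+1)) := by
  rw [qPoch_succ]; ring_nf

section hyp4
variable {q z : ℝ} (hq : q ≠ 0) (h1 : ∀ j : ℕ, 1 ≤ j → 1 - q ^ j ≠ 0)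
  (h2 : ∀ j : ℕ, 1 ≤ j → 1 - z * q ^ j ≠ 0)

include hq h1 in
lemma ppp (n i : ℕ) (hi : 1 ≤ i) (hin : i ≤ n+1) :
    (dd q (n+1) i - dd q n i) * ((1 - q^(n+1)) * (1 - z*q^(n+1)))
      = q^(n+1-i) * dd q (n+1) i * ((1-z*q^i)*(1-q^i))
        - q^(n-i) * dd q (n+1) (i+1) * (1-q^(i+1)) := by
  rcases Nat.lt_or_ge n i with h | h
  · -- i = n+1
    have hi' : i = n+1 := by omega
    subst hi'
    rw [dd_of_gt (by omega : n < n+1), dd_of_gt (by omega : n+1 < n+1+1)]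
    simp only [Nat.sub_self, pow_zero]
    ring
  · -- i ≤ n
    obtain ⟨a, rfl⟩ : ∃ a, n = a + i := ⟨n - i, by omega⟩
    obtain ⟨b, rfl⟩ : ∃ b, i = b + 1 := ⟨i - 1, by omega⟩
    have hD : (1:ℝ) - q^(a+(b+1)+1) ≠ 0 := h1 _ (by omega)
    have hu : (1:ℝ) - q^(b+1+1) ≠ 0 := h1 _ (by omega)
    have hv : (1:ℝ) - q^(a+1) ≠ 0 := h1 _ (by omega)
    have hB1 : qBinom q (a+(b+1)) (b+1)
        = qBinom q (a+(b+1)+1) (b+1) * (1-q^(a+1)) / (1-q^(a+(b+1)+1)) := by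
      rw [eq_div_iff hD]
      have := qBinom_R1 h1 (a+(b+1)) (b+1)
      rw [show a+(b+1)+1-(b+1) = a+1 by omega] at this
      linarith [this]
    have hB2 : qBinom q (a+(b+1)+1) (b+1+1)
        = qBinom q (a+(b+1)+1) (b+1) * (1-q^(a+1)) / (1-q^(b+1+1)) := by
      rw [eq_div_iff hu]
      have := qBinom_R2 h1 (a+(b+1)) (b+1)
      rw [show a+(b+1)+1-(b+1) = a+1 by omega] at this
      linarith [this]
    rw [dd_eq hq, dd_eq hq, dd_eq hq, hB1, hB2]
    simp only [Nat.add_sub_cancel, show a+(b+1)+1-(b+1) = a+1 by omega,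
      show a+(b+1)-(b+1) = a by omega]
    rw [show (b+1+1)*(b+1+1+1)/2 = (b+1)*(b+1+1)/2 + (b+1+1) from E_succ (b+1), pow_add,
      qPoch_q_succ q b]
    have hw : (q:ℝ)^((b+1)*(b+1+1)/2) ≠ 0 := pow_ne_zero _ hq
    have hqp : ∀ m : ℕ, (q:ℝ)^m ≠ 0 := fun m => pow_ne_zero _ hq
    field_simp
    ring
end hyp4

lemma sum_telescope_Icc (f : ℕ → ℝ) (a : ℕ) : ∀ b, a ≤ b →
    ∑ i ∈ Finset.Icc a b, (f i - f (i+1)) = f a - f (b+1) := by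
  intro b hb
  induction b, hb using Nat.le_induction with
  | base => simp
  | succ m hm ih =>
      rw [Finset.sum_Icc_succ_top (by omega), ih]; ring

section hyp5
variable {q z : ℝ} (hq : q ≠ 0) (h1 : ∀ j : ℕ, 1 ≤ j → 1 - q ^ j ≠ 0)
  (h2 : ∀ j : ℕ, 1 ≤ j → 1 - z * q ^ j ≠ 0)

include hq h1 h2 in
lemma keyM (t : ℕ) (ht : 1 ≤ t) : ∀ n, t ≤ n →
    ∑ i ∈ Finset.Icc t n, q^i * dd q i t / ((1-q^i)*(1-z*q^i))
      = (∑ i ∈ Finset.Icc t n, dd q n i / qPoch q (z*q) i)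
        * (q^t * qPoch q (z*q) t / ((1-z*q^t)*(1-q^t))) := by
  intro n hn
  induction n, hn using Nat.le_induction with
  | base =>
      rw [Finset.Icc_self, Finset.sum_singleton, Finset.sum_singleton]
      have hZ := qPoch_z_ne h2 t
      have ha := h1 t ht
      have hb := h2 t ht
      field_simp
  | succ n hn ih =>
      have hZ := qPoch_z_ne h2
      have hD : ((1:ℝ) - q^(n+1)) * (1 - z*q^(n+1)) ≠ 0 :=
        mul_ne_zero (h1 _ (by omega)) (h2 _ (by omega))
      -- the telescoping function
      set T : ℕ → ℝ := fun i => q^(n+1-i) * dd q (n+1) i * ((1-z*q^i)*(1-q^i))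
          / (qPoch q (z*q) i * ((1 - q^(n+1)) * (1 - z*q^(n+1)))) with hT
      have pdiv : ∀ i, 1 ≤ i → i ≤ n+1 →
          (dd q (n+1) i - dd q n i) / qPoch q (z*q) i = T i - T (i+1) := by
        intro i hi hin
        have e2 : T (i+1) = q^(n-i) * dd q (n+1) (i+1) * (1-q^(i+1))
            / (qPoch q (z*q) i * ((1 - q^(n+1)) * (1 - z*q^(n+1)))) := by
          simp only [hT]
          rw [qPoch_zq_succ, show n+1-(i+1) = n-i by omega]
          rw [show qPoch q (z*q) i * (1 - z*q^(i+1)) * ((1 - q^(n+1)) * (1 - z*q^(n+1)))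
              = (1 - z*q^(i+1)) * (qPoch q (z*q) i * ((1 - q^(n+1)) * (1 - z*q^(n+1)))) by ring]
          rw [show q^(n-i) * dd q (n+1) (i+1) * ((1-z*q^(i+1))*(1-q^(i+1)))
              = (1 - z*q^(i+1)) * (q^(n-i) * dd q (n+1) (i+1) * (1-q^(i+1))) by ring]
          rw [mul_div_mul_left _ _ (h2 _ (by omega))]
        rw [e2]
        simp only [hT]
        rw [div_sub_div_same, ← ppp hq h1 n i hi hin]
        rw [mul_div_assoc, mul_comm (qPoch q (z*q) i) ((1 - q^(n+1)) * (1 - z*q^(n+1))),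
          ← div_div, div_self hD, mul_one_div]
      have hCdiff : (∑ i ∈ Finset.Icc t (n+1), dd q (n+1) i / qPoch q (z*q) i)
          = (∑ i ∈ Finset.Icc t n, dd q n i / qPoch q (z*q) i) + T t := by
        have ext : (∑ i ∈ Finset.Icc t n, dd q n i / qPoch q (z*q) i)
            = ∑ i ∈ Finset.Icc t (n+1), dd q n i / qPoch q (z*q) i := by
          rw [Finset.sum_Icc_succ_top (by omega), dd_of_gt (by omega : n < n+1)]
          simp
        rw [ext, ← sub_eq_iff_eq_add', ← Finset.sum_sub_distrib]
        have : ∀ i ∈ Finset.Icc t (n+1),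
            dd q (n+1) i / qPoch q (z*q) i - dd q n i / qPoch q (z*q) i = T i - T (i+1) := by
          intro i hi
          rw [Finset.mem_Icc] at hi
          rw [div_sub_div_same]
          exact pdiv i (by omega) (by omega)
        rw [Finset.sum_congr rfl this, sum_telescope_Icc _ _ _ (by omega)]
        have : T (n+1+1) = 0 := by
          simp only [hT]
          rw [dd_of_gt (by omega : n+1 < n+1+1)]
          simp
        rw [this, sub_zero]
      rw [Finset.sum_Icc_succ_top (by omega : t ≤ n+1), ih, hCdiff]
      -- remaining: new term equality
      have hnew : q^(n+1) * dd q (n+1) t / ((1-q^(n+1))*(1-z*q^(n+1)))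
          = T t * (q^t * qPoch q (z*q) t / ((1-z*q^t)*(1-q^t))) := by
        simp only [hT]
        obtain ⟨a, rfl⟩ : ∃ a, n = a + t := ⟨n - t, by omega⟩
        rw [show a+t+1-t = a+1 by omega]
        have hqp : ∀ m : ℕ, (q:ℝ)^m ≠ 0 := fun m => pow_ne_zero _ hq
        have l1 := h1 t ht
        have l2 := h2 t ht
        have l3 := h1 (a+t+1) (by omega)
        have l4 := h2 (a+t+1) (by omega)
        have l5 := hZ t
        field_simp
        ring
      rw [hnew]
      ring
end hyp5

lemma sum_swap_Icc (f : ℕ → ℕ → ℝ) (n : ℕ) :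
    ∑ i ∈ Finset.Icc 1 n, ∑ t ∈ Finset.Icc 1 i, f i t
      = ∑ t ∈ Finset.Icc 1 n, ∑ i ∈ Finset.Icc t n, f i t := by
  rw [Finset.sum_comm']
  intro i t
  simp only [Finset.mem_Icc]
  omega

section hyp6
variable {q x : ℝ} (hq : q ≠ 0) (h1 : ∀ j : ℕ, 1 ≤ j → 1 - q ^ j ≠ 0)

include hq h1 in
lemma one_sub_xpow (N : ℕ) :
    1 - x^N = ∑ t ∈ Finset.Icc 1 N, dd q N t * (qPoch q x t / qPoch q q (t-1)) := by
  have hx := xpow_expand hq h1 (x := x) N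
  have eA0 : coeffA q N 0 * qPoch q x 0 = 1 := by
    simp [coeffA, qBinom_zero h1, qPoch]
  have split : ∑ t ∈ Finset.range (N+1), coeffA q N t * qPoch q x t
      = 1 + ∑ t ∈ Finset.Icc 1 N, coeffA q N t * qPoch q x t := by
    rw [Finset.sum_range_succ' (fun t => coeffA q N t * qPoch q x t) N, eA0, add_comm]
    congr 1
    rw [Finset.sum_bij (fun (i : ℕ) _ => i + 1)]
    · intro a ha
      simp only [Finset.mem_range] at ha
      simp only [Finset.mem_Icc]
      omega
    · intro a _ b _ h; omega
    · intro b hb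
      simp only [Finset.mem_Icc] at hb
      exact ⟨b - 1, Finset.mem_range.mpr (by omega), by omega⟩
    · intro a _; rfl
  rw [hx, split]
  have : ∀ t ∈ Finset.Icc 1 N,
      coeffA q N t * qPoch q x t = - (dd q N t * (qPoch q x t / qPoch q q (t-1))) := by
    intro t htm
    rw [Finset.mem_Icc] at htm
    obtain ⟨b, rfl⟩ : ∃ b, t = b + 1 := ⟨t - 1, by omega⟩
    rw [coeffA_eq hq, dd_eq hq]
    simp only [Nat.add_sub_cancel]
    have hp := qPoch_q_ne h1 b
    field_simp
    ring
  rw [Finset.sum_congr rfl this, Finset.sum_neg_distrib]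
  ring
end hyp6

/-- Left-hand side multiple sum of Proposition 4.1:
`lhs41 q x zs m j top` is the sum over chains `top ≥ i_j ≥ ⋯ ≥ i_{j+m-1} ≥ 1` of
`(1 - x^{i_last}) ∏ q^{i_l}/((1-q^{i_l})(1 - z_l q^{i_l}))`. -/
noncomputable def lhs41 (q x : ℝ) (zs : ℕ → ℝ) : ℕ → ℕ → ℕ → ℝ
  | 0, _, top => 1 - x ^ top
  | m + 1, j, top =>
      ∑ i ∈ Finset.Icc 1 top,
        q ^ i / ((1 - q ^ i) * (1 - zs j * q ^ i)) * lhs41 q x zs m (j + 1) i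

/-- Inner multiple sum on the right-hand side of Proposition 4.1, with `m` remaining levels,
the next labelled `j`. -/
noncomputable def rhs41 (q x : ℝ) (zs : ℕ → ℝ) : ℕ → ℕ → ℕ → ℝ
  | 0, _, _ => 1
  | 1, j, top =>
      ∑ i ∈ Finset.Icc 1 top,
        q ^ i / (1 - zs j * q ^ i) *
          (qPoch q x i * qPoch q (zs j * q) i / qPoch q q i)
  | m + 2, j, top =>
      ∑ i ∈ Finset.Icc 1 top,
        q ^ i / (1 - zs j * q ^ i) *
          (qPoch q (zs j * q) i / ((1 - q ^ i) * qPoch q (zs (j + 1) * q) i)) *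
          rhs41 q x zs (m + 1) (j + 1) i

section main
variable {q x : ℝ} {zs : ℕ → ℝ} (hq : q ≠ 0)
  (h1 : ∀ j : ℕ, 1 ≤ j → 1 - q ^ j ≠ 0)
  (h2 : ∀ l j : ℕ, 1 ≤ j → 1 - zs l * q ^ j ≠ 0)

include hq h1 h2 in
lemma genG : ∀ m, 1 ≤ m → ∀ j n, 1 ≤ n →
    lhs41 q x zs m j n
      = ∑ i ∈ Finset.Icc 1 n, dd q n i / qPoch q (zs j * q) i * rhs41 q x zs m j i := by
  intro m hm
  induction m, hm using Nat.le_induction with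
  | base =>
      intro j n hn
      simp only [lhs41, rhs41]
      have step1 : ∀ i1 ∈ Finset.Icc 1 n,
          q ^ i1 / ((1 - q ^ i1) * (1 - zs j * q ^ i1)) * (1 - x ^ i1)
            = ∑ t ∈ Finset.Icc 1 i1, q ^ i1 * dd q i1 t / ((1 - q ^ i1) * (1 - zs j * q ^ i1))
                * (qPoch q x t / qPoch q q (t-1)) := by
        intro i1 _
        rw [one_sub_xpow hq h1 (x := x) i1, Finset.mul_sum]
        refine Finset.sum_congr rfl fun t _ => ?_
        ring
      rw [Finset.sum_congr rfl step1, sum_swap_Icc]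
      have step2 : ∀ i ∈ Finset.Icc 1 n,
          dd q n i / qPoch q (zs j * q) i *
            (∑ t ∈ Finset.Icc 1 i, q ^ t / (1 - zs j * q ^ t) *
              (qPoch q x t * qPoch q (zs j * q) t / qPoch q q t))
          = ∑ t ∈ Finset.Icc 1 i, dd q n i / qPoch q (zs j * q) i *
              (q ^ t / (1 - zs j * q ^ t) *
                (qPoch q x t * qPoch q (zs j * q) t / qPoch q q t)) :=
        fun i _ => Finset.mul_sum _ _ _
      rw [Finset.sum_congr rfl step2, sum_swap_Icc]
      refine Finset.sum_congr rfl fun t htm => ?_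
      rw [Finset.mem_Icc] at htm
      rw [← Finset.sum_mul, keyM hq h1 (h2 j) t htm.1 n htm.2, ← Finset.sum_mul, mul_assoc]
      refine congrArg _ ?_
      -- scalar identity in t
      obtain ⟨b, rfl⟩ : ∃ b, t = b + 1 := ⟨t - 1, by omega⟩
      rw [qPoch_q_succ q b]
      simp only [Nat.add_sub_cancel]
      have l1 := h1 (b+1) (by omega)
      have l2 := h2 j (b+1) (by omega)
      have l3 := qPoch_q_ne h1 b
      field_simp
  | succ m hm ih =>
      intro j n hn
      obtain ⟨m', rfl⟩ : ∃ m', m = m' + 1 := ⟨m - 1, by omega⟩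
      rw [lhs41]
      simp only [rhs41]
      have step1 : ∀ i1 ∈ Finset.Icc 1 n,
          q ^ i1 / ((1 - q ^ i1) * (1 - zs j * q ^ i1)) * lhs41 q x zs (m'+1) (j+1) i1
            = ∑ t ∈ Finset.Icc 1 i1, q ^ i1 * dd q i1 t / ((1 - q ^ i1) * (1 - zs j * q ^ i1))
                * (rhs41 q x zs (m'+1) (j+1) t / qPoch q (zs (j+1) * q) t) := by
        intro i1 hi1
        rw [Finset.mem_Icc] at hi1
        rw [ih (j+1) i1 hi1.1, Finset.mul_sum]
        refine Finset.sum_congr rfl fun t _ => ?_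
        ring
      rw [Finset.sum_congr rfl step1, sum_swap_Icc]
      have step2 : ∀ i ∈ Finset.Icc 1 n,
          dd q n i / qPoch q (zs j * q) i *
            (∑ t ∈ Finset.Icc 1 i, q ^ t / (1 - zs j * q ^ t) *
              (qPoch q (zs j * q) t / ((1 - q ^ t) * qPoch q (zs (j + 1) * q) t)) *
              rhs41 q x zs (m' + 1) (j + 1) t)
          = ∑ t ∈ Finset.Icc 1 i, dd q n i / qPoch q (zs j * q) i *
              (q ^ t / (1 - zs j * q ^ t) *
                (qPoch q (zs j * q) t / ((1 - q ^ t) * qPoch q (zs (j + 1) * q) t)) *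
                rhs41 q x zs (m' + 1) (j + 1) t) :=
        fun i _ => Finset.mul_sum _ _ _
      rw [Finset.sum_congr rfl step2, sum_swap_Icc]
      refine Finset.sum_congr rfl fun t htm => ?_
      rw [Finset.mem_Icc] at htm
      rw [← Finset.sum_mul, keyM hq h1 (h2 j) t htm.1 n htm.2, ← Finset.sum_mul, mul_assoc]
      refine congrArg _ ?_
      have l1 := h1 t (by omega)
      have l2 := h2 j t (by omega)
      have l3 := qPoch_z_ne (h2 (j+1)) t
      field_simp
end main

/-- Proposition 4.1. -/
theorem prop41 (q x : ℝ) (zs : ℕ → ℝ) (n k : ℕ) (hn : 0 < n) (hk : 0 < k) (hq : q ≠ 0)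
    (hden1 : ∀ j : ℕ, 1 ≤ j → 1 - q ^ j ≠ 0)
    (hden2 : ∀ l j : ℕ, 1 ≤ j → 1 - zs l * q ^ j ≠ 0) :
    lhs41 q x zs k 1 n =
      ∑ i ∈ Finset.Icc 1 n,
        qBinom q n i * (-1) ^ (i - 1) * q ^ (((i * (i + 1) / 2 : ℕ) : ℤ) - (n : ℤ) * i) *
          (qPoch q q (i - 1) / qPoch q (zs 1 * q) i) * rhs41 q x zs k 1 i := by
  have h := genG (x := x) hq hden1 hden2 k hk 1 n hn
  rw [h]
  refine Finset.sum_congr rfl fun i hi => ?_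
  simp only [dd]
  ring
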